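/- For k ≥ 3, the automorphism group of HS(2k,k) has order 2·(2k-1)!. -/

import Mathlib

set_option linter.unusedSectionVars false
set_option maxHeartbeats 800000

open Finset

/-- Level membership -/
def LvL (Y : Finset ℕ) (m : ℕ) (S : Finset ℕ) : Prop := S ⊆ Y ∧ S.card = m

/-- Bundled hypotheses for the middle-levels rigidity argument. -/
structure MidHyp (k : ℕ) (Y : Finset ℕ) (ψ φ : Finset ℕ → Finset ℕ) : Prop where
  hk : 3 ≤ k
  hY : Y.card = 2*k - 1
  hψ : ∀ S, LvL Y (k-1) S → LvL Y (k-1) (ψ S)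
  hφ : ∀ T, LvL Y k T → LvL Y k (φ T)
  hψinj : ∀ S S', LvL Y (k-1) S → LvL Y (k-1) S' → ψ S = ψ S' → S = S'
  hφinj : ∀ T T', LvL Y k T → LvL Y k T' → φ T = φ T' → T = T'
  hcompat : ∀ S T, LvL Y (k-1) S → LvL Y k T → (S ⊆ T ↔ ψ S ⊆ φ T)

namespace MidHyp

variable {k : ℕ} {Y : Finset ℕ} {ψ φ : Finset ℕ → Finset ℕ}

lemma erase_lvl {T : Finset ℕ} (hT : LvL Y k T) {x : ℕ} (hx : x ∈ T) :
    LvL Y (k-1) (T.erase x) :=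
  ⟨(erase_subset _ _).trans hT.1, by rw [card_erase_of_mem hx, hT.2]⟩

lemma psi_sub_phi (H : MidHyp k Y ψ φ) {T : Finset ℕ} (hT : LvL Y k T)
    {x : ℕ} (hx : x ∈ T) : ψ (T.erase x) ⊆ φ T :=
  (H.hcompat _ _ (erase_lvl hT hx) hT).mp (erase_subset _ _)

lemma diff_card_one (H : MidHyp k Y ψ φ) {T : Finset ℕ} (hT : LvL Y k T)
    {x : ℕ} (hx : x ∈ T) : (φ T \ ψ (T.erase x)).card = 1 := by
  have h1 := H.psi_sub_phi hT hx
  have h2 := (H.hψ _ (erase_lvl hT hx)).2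
  have h3 := (H.hφ _ hT).2
  have hk := H.hk
  rw [card_sdiff_of_subset h1, h2, h3]
  omega

/-- two distinct (k-1)-subsets of a k-set cover it -/
lemma cover_of_two {W A A' : Finset ℕ} {k : ℕ} (hA : A ⊆ W) (hA' : A' ⊆ W)
    (cA : A.card = k - 1) (cA' : A'.card = k - 1) (cW : W.card = k)
    (hne : A ≠ A') (hk1 : 1 ≤ k) : A ∪ A' = W := by
  have hsub : A ∪ A' ⊆ W := union_subset hA hA'
  have hle : (A ∪ A').card ≤ k := cW ▸ card_le_card hsub
  rcases Nat.lt_or_ge (A ∪ A').card k with h | h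
  · exfalso
    have h1 : A = A ∪ A' := eq_of_subset_of_card_le subset_union_left (by omega)
    have h2 : A' = A ∪ A' := eq_of_subset_of_card_le subset_union_right (by omega)
    exact hne (h1.trans h2.symm)
  · exact eq_of_subset_of_card_le hsub (by omega)

/-- the key single-swap independence lemma -/
lemma single_swap (H : MidHyp k Y ψ φ) {T T' : Finset ℕ} (hT : LvL Y k T) (hT' : LvL Y k T')
    {x : ℕ} (hxT : x ∈ T) (hxT' : x ∈ T') (hint : (T ∩ T').card = k - 1) :
    φ T \ ψ (T.erase x) = φ T' \ ψ (T'.erase x) := by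
  have hk := H.hk
  have hk1 : 1 ≤ k := by omega
  have hTne : T ≠ T' := by
    intro h; rw [h, inter_self, hT'.2] at hint; omega
  set S : Finset ℕ := T ∩ T' with hSdef
  have hS : LvL Y (k-1) S := ⟨(inter_subset_left).trans hT.1, hint⟩
  have hxS : x ∈ S := mem_inter.mpr ⟨hxT, hxT'⟩
  set U0 : Finset ℕ := (T ∪ T').erase x with hU0def
  have hcardTU : (T ∪ T').card = k + 1 := by
    have := card_union_add_card_inter T T'
    rw [hT.2, hT'.2, hint] at this; omega
  have hU0 : LvL Y k U0 := by
    constructor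
    · exact (erase_subset _ _).trans (union_subset hT.1 hT'.1)
    · rw [card_erase_of_mem (mem_union_left _ hxT), hcardTU]; omega
  have hTx_sub : T.erase x ⊆ U0 := erase_subset_erase _ subset_union_left
  have hT'x_sub : T'.erase x ⊆ U0 := erase_subset_erase _ subset_union_right
  set C : Finset ℕ := ψ S with hCdef
  set B1 : Finset ℕ := ψ (T.erase x) with hB1def
  set B2 : Finset ℕ := ψ (T'.erase x) with hB2def
  set D : Finset ℕ := φ U0 with hDdef
  have hCT : C ⊆ φ T := (H.hcompat _ _ hS hT).mp inter_subset_left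
  have hCT' : C ⊆ φ T' := (H.hcompat _ _ hS hT').mp inter_subset_right
  have hB1T : B1 ⊆ φ T := H.psi_sub_phi hT hxT
  have hB2T' : B2 ⊆ φ T' := H.psi_sub_phi hT' hxT'
  have hB1D : B1 ⊆ D := (H.hcompat _ _ (erase_lvl hT hxT) hU0).mp hTx_sub
  have hB2D : B2 ⊆ D := (H.hcompat _ _ (erase_lvl hT' hxT') hU0).mp hT'x_sub
  have hClvl := H.hψ _ hS
  have hB1lvl := H.hψ _ (erase_lvl hT hxT)
  have hB2lvl := H.hψ _ (erase_lvl hT' hxT')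
  have hφTlvl := H.hφ _ hT
  have hφT'lvl := H.hφ _ hT'
  have hDlvl := H.hφ _ hU0
  have hB1C : B1 ≠ C := by
    intro h
    have := H.hψinj _ _ (erase_lvl hT hxT) hS h
    exact (notMem_erase x T) (this ▸ hxS)
  have hB2C : B2 ≠ C := by
    intro h
    have := H.hψinj _ _ (erase_lvl hT' hxT') hS h
    exact (notMem_erase x T') (this ▸ hxS)
  obtain ⟨p, hp⟩ := card_eq_one.mp (H.diff_card_one hT hxT)
  obtain ⟨q, hq⟩ := card_eq_one.mp (H.diff_card_one hT' hxT')
  rw [show φ T \ ψ (T.erase x) = φ T \ B1 from rfl,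
      show φ T' \ ψ (T'.erase x) = φ T' \ B2 from rfl] at *
  rw [hp, hq]
  suffices hpq : p = q by rw [hpq]
  by_contra hpq
  have hpmem : p ∈ φ T ∧ p ∉ B1 := mem_sdiff.mp (hp ▸ mem_singleton_self p)
  have hqmem : q ∈ φ T' ∧ q ∉ B2 := mem_sdiff.mp (hq ▸ mem_singleton_self q)
  have hcoverT : B1 ∪ C = φ T :=
    cover_of_two hB1T hCT hB1lvl.2 hClvl.2 hφTlvl.2 hB1C hk1
  have hcoverT' : B2 ∪ C = φ T' :=
    cover_of_two hB2T' hCT' hB2lvl.2 hClvl.2 hφT'lvl.2 hB2C hk1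
  have hpC : p ∈ C := by
    have := hpmem.1; rw [← hcoverT] at this
    rcases mem_union.mp this with h | h
    · exact absurd h hpmem.2
    · exact h
  have hqC : q ∈ C := by
    have := hqmem.1; rw [← hcoverT'] at this
    rcases mem_union.mp this with h | h
    · exact absurd h hqmem.2
    · exact h
  have hCp : ∀ a ∈ C, a ≠ p → a ∈ B1 := by
    intro a haC hap
    by_contra haB1
    have : a ∈ φ T \ B1 := mem_sdiff.mpr ⟨hCT haC, haB1⟩
    rw [hp, mem_singleton] at this; exact hap this
  have hCq : ∀ a ∈ C, a ≠ q → a ∈ B2 := by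
    intro a haC haq
    by_contra haB2
    have : a ∈ φ T' \ B2 := mem_sdiff.mpr ⟨hCT' haC, haB2⟩
    rw [hq, mem_singleton] at this; exact haq this
  have hCD : C ⊆ D := by
    intro a haC
    by_cases hap : a = p
    · exact hB2D (hCq a haC (by rw [hap]; exact hpq))
    · exact hB1D (hCp a haC hap)
  have hs1card : (φ T \ C).card = 1 := by
    rw [card_sdiff_of_subset hCT, hClvl.2, hφTlvl.2]; omega
  have hs2card : (φ T' \ C).card = 1 := by
    rw [card_sdiff_of_subset hCT', hClvl.2, hφT'lvl.2]; omega
  obtain ⟨s1, hs1⟩ := card_eq_one.mp hs1card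
  obtain ⟨s2, hs2⟩ := card_eq_one.mp hs2card
  have hs1mem : s1 ∈ φ T ∧ s1 ∉ C := mem_sdiff.mp (hs1 ▸ mem_singleton_self s1)
  have hs2mem : s2 ∈ φ T' ∧ s2 ∉ C := mem_sdiff.mp (hs2 ▸ mem_singleton_self s2)
  have hs1D : s1 ∈ D := by
    have := hs1mem.1; rw [← hcoverT] at this
    rcases mem_union.mp this with h | h
    · exact hB1D h
    · exact absurd h hs1mem.2
  have hs2D : s2 ∈ D := by
    have := hs2mem.1; rw [← hcoverT'] at this
    rcases mem_union.mp this with h | h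
    · exact hB2D h
    · exact absurd h hs2mem.2
  have hDC : (D \ C).card = 1 := by
    rw [card_sdiff_of_subset hCD, hClvl.2, hDlvl.2]; omega
  obtain ⟨r, hr⟩ := card_eq_one.mp hDC
  have hs1r : s1 = r := by
    have : s1 ∈ D \ C := mem_sdiff.mpr ⟨hs1D, hs1mem.2⟩
    rwa [hr, mem_singleton] at this
  have hs2r : s2 = r := by
    have : s2 ∈ D \ C := mem_sdiff.mpr ⟨hs2D, hs2mem.2⟩
    rwa [hr, mem_singleton] at this
  have hφTeq : φ T = C ∪ {s1} := by
    rw [← hs1]; exact (union_sdiff_of_subset hCT).symm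
  have hφT'eq : φ T' = C ∪ {s2} := by
    rw [← hs2]; exact (union_sdiff_of_subset hCT').symm
  have : φ T = φ T' := by rw [hφTeq, hφT'eq, hs1r, hs2r]
  exact hTne (H.hφinj _ _ hT hT' this)

end MidHyp

namespace MidHyp

variable {k : ℕ} {Y : Finset ℕ} {ψ φ : Finset ℕ → Finset ℕ}

lemma diff_indep_aux (H : MidHyp k Y ψ φ) :
    ∀ n : ℕ, ∀ T T' : Finset ℕ, (T' \ T).card ≤ n → LvL Y k T → LvL Y k T' →
    ∀ x : ℕ, x ∈ T → x ∈ T' →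
    φ T \ ψ (T.erase x) = φ T' \ ψ (T'.erase x) := by
  intro n
  induction n with
  | zero =>
    intro T T' hcard hT hT' x hxT hxT'
    have h0 : T' \ T = ∅ := card_eq_zero.mp (Nat.le_zero.mp hcard)
    have hsub : T' ⊆ T := sdiff_eq_empty_iff_subset.mp h0
    have : T' = T := eq_of_subset_of_card_le hsub (by rw [hT.2, hT'.2])
    rw [this]
  | succ n ih =>
    intro T T' hcard hT hT' x hxT hxT'
    by_cases hTT' : T' = T
    · rw [hTT']
    · have hne : (T' \ T).Nonempty := by
        rw [← card_pos]
        by_contra h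
        push_neg at h
        have h0 : T' \ T = ∅ := card_eq_zero.mp (Nat.le_zero.mp h)
        exact hTT' (eq_of_subset_of_card_le (sdiff_eq_empty_iff_subset.mp h0)
          (by rw [hT.2, hT'.2]))
      obtain ⟨z, hz⟩ := hne
      have hzT' : z ∈ T' := (mem_sdiff.mp hz).1
      have hzT : z ∉ T := (mem_sdiff.mp hz).2
      have hneTT : (T \ T').Nonempty := by
        rw [← card_pos]
        by_contra h
        push_neg at h
        have h0 : T \ T' = ∅ := card_eq_zero.mp (Nat.le_zero.mp h)
        exact hTT' ((eq_of_subset_of_card_le (sdiff_eq_empty_iff_subset.mp h0)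
          (by rw [hT.2, hT'.2])).symm)
      obtain ⟨y, hy⟩ := hneTT
      have hyT : y ∈ T := (mem_sdiff.mp hy).1
      have hyT' : y ∉ T' := (mem_sdiff.mp hy).2
      have hyx : y ≠ x := fun h => hyT' (h ▸ hxT')
      have hyz : y ≠ z := fun h => hzT (h ▸ hyT)
      set T'' : Finset ℕ := insert z (T.erase y) with hT''def
      have hzE : z ∉ T.erase y := fun h => hzT (mem_of_mem_erase h)
      have hT'' : LvL Y k T'' := by
        constructor
        · exact insert_subset (hT'.1 hzT') ((erase_subset _ _).trans hT.1)
        · rw [card_insert_of_notMem hzE, card_erase_of_mem hyT, hT.2]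
          have : 1 ≤ k := by have := H.hk; omega
          omega
      have hxT'' : x ∈ T'' := mem_insert_of_mem (mem_erase.mpr ⟨Ne.symm hyx, hxT⟩)
      have hintTT'' : (T ∩ T'').card = k - 1 := by
        have : T ∩ T'' = T.erase y := by
          ext a
          simp only [mem_inter, hT''def, mem_insert, mem_erase]
          constructor
          · rintro ⟨haT, h | ⟨hay, haT2⟩⟩
            · exact absurd (h ▸ haT) hzT
            · exact ⟨hay, haT⟩
          · rintro ⟨hay, haT⟩
            exact ⟨haT, Or.inr ⟨hay, haT⟩⟩
        rw [this, card_erase_of_mem hyT, hT.2]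
      have step1 := H.single_swap hT hT'' hxT hxT'' hintTT''
      have hdec : (T' \ T'').card ≤ n := by
        have hsub2 : T' \ T'' ⊆ (T' \ T).erase z := by
          intro a ha
          rw [mem_sdiff] at ha
          rw [mem_erase, mem_sdiff]
          have haz : a ≠ z := fun h => ha.2 (h ▸ mem_insert_self z _)
          refine ⟨haz, ha.1, fun haT => ?_⟩
          have hay : a ≠ y := fun h => hyT' (h ▸ ha.1)
          exact ha.2 (mem_insert_of_mem (mem_erase.mpr ⟨hay, haT⟩))
        calc (T' \ T'').card ≤ ((T' \ T).erase z).card := card_le_card hsub2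
          _ = (T' \ T).card - 1 := card_erase_of_mem (mem_sdiff.mpr ⟨hzT', hzT⟩) ▸ rfl
          _ ≤ n := by omega
      have step2 := ih T'' T' hdec hT'' hT' x hxT'' hxT'
      rw [step1, step2]

lemma diff_indep (H : MidHyp k Y ψ φ) {T T' : Finset ℕ} (hT : LvL Y k T) (hT' : LvL Y k T')
    {x : ℕ} (hxT : x ∈ T) (hxT' : x ∈ T') :
    φ T \ ψ (T.erase x) = φ T' \ ψ (T'.erase x) :=
  H.diff_indep_aux (T' \ T).card T T' le_rfl hT hT' x hxT hxT'

open Classical in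
/-- The point map induced by a middle-levels isomorphism. -/
noncomputable def pt (H : MidHyp k Y ψ φ) (x : ℕ) : ℕ :=
  if h : ∃ T, LvL Y k T ∧ x ∈ T then
    (φ h.choose \ ψ (h.choose.erase x)).sum id
  else 0

lemma pt_spec (H : MidHyp k Y ψ φ) {T : Finset ℕ} (hT : LvL Y k T)
    {x : ℕ} (hx : x ∈ T) : φ T \ ψ (T.erase x) = {H.pt x} := by
  have hex : ∃ T, LvL Y k T ∧ x ∈ T := ⟨T, hT, hx⟩
  obtain ⟨p, hp⟩ := card_eq_one.mp (H.diff_card_one hex.choose_spec.1 hex.choose_spec.2)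
  have heq : φ T \ ψ (T.erase x) = φ hex.choose \ ψ (hex.choose.erase x) :=
    H.diff_indep hT hex.choose_spec.1 hx hex.choose_spec.2
  rw [heq, hp]
  unfold pt
  rw [dif_pos hex, hp, sum_singleton, id]

lemma pt_mem (H : MidHyp k Y ψ φ) {T : Finset ℕ} (hT : LvL Y k T)
    {x : ℕ} (hx : x ∈ T) : H.pt x ∈ φ T := by
  have := H.pt_spec hT hx
  have hmem : H.pt x ∈ φ T \ ψ (T.erase x) := this ▸ mem_singleton_self _
  exact (mem_sdiff.mp hmem).1

lemma pt_mem_Y (H : MidHyp k Y ψ φ) {x : ℕ} (hx : x ∈ Y) : H.pt x ∈ Y := by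
  obtain ⟨T, hsub, hTY, hcard⟩ := exists_subsuperset_card_eq (n := k)
    (singleton_subset_iff.mpr hx) (by have := H.hk; simp only [card_singleton]; omega)
    (by rw [H.hY]; have := H.hk; omega)
  exact (H.hφ T ⟨hTY, hcard⟩).1 (H.pt_mem ⟨hTY, hcard⟩ (hsub (mem_singleton_self x)))

lemma pt_injOn (H : MidHyp k Y ψ φ) {x x' : ℕ} (hx : x ∈ Y) (hx' : x' ∈ Y)
    (heq : H.pt x = H.pt x') : x = x' := by
  by_contra hne
  obtain ⟨T, hsub, hTY, hcard⟩ := exists_subsuperset_card_eq (n := k)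
    (show {x, x'} ⊆ Y from insert_subset hx (singleton_subset_iff.mpr hx'))
    (by have := H.hk; have h2 : ({x, x'} : Finset ℕ).card ≤ 2 := card_insert_le _ _ |>.trans (by simp); omega)
    (by rw [H.hY]; have := H.hk; omega)
  have hxT : x ∈ T := hsub (mem_insert_self _ _)
  have hx'T : x' ∈ T := hsub (mem_insert_of_mem (mem_singleton_self _))
  have h1 := H.pt_spec ⟨hTY, hcard⟩ hxT
  have h2 := H.pt_spec ⟨hTY, hcard⟩ hx'T
  rw [heq] at h1
  have hψeq : ψ (T.erase x) = ψ (T.erase x') := by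
    have e1 : ψ (T.erase x) = φ T \ {H.pt x'} := by
      rw [← h1, sdiff_sdiff_right_self, inf_eq_inter,
        inter_eq_right.mpr (H.psi_sub_phi ⟨hTY, hcard⟩ hxT)]
    have e2 : ψ (T.erase x') = φ T \ {H.pt x'} := by
      rw [← h2, sdiff_sdiff_right_self, inf_eq_inter,
        inter_eq_right.mpr (H.psi_sub_phi ⟨hTY, hcard⟩ hx'T)]
    rw [e1, e2]
  have := H.hψinj _ _ (erase_lvl ⟨hTY, hcard⟩ hxT) (erase_lvl ⟨hTY, hcard⟩ hx'T) hψeq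
  have hx'mem : x' ∈ T.erase x := mem_erase.mpr ⟨Ne.symm hne, hx'T⟩
  rw [this] at hx'mem
  exact (notMem_erase x' T) hx'mem

lemma phi_eq_image (H : MidHyp k Y ψ φ) {T : Finset ℕ} (hT : LvL Y k T) :
    φ T = T.image H.pt := by
  have hsub : T.image H.pt ⊆ φ T := by
    intro a ha
    obtain ⟨x, hx, rfl⟩ := mem_image.mp ha
    exact H.pt_mem hT hx
  have hcard : (T.image H.pt).card = k := by
    rw [card_image_of_injOn (fun a ha b hb => H.pt_injOn (hT.1 ha) (hT.1 hb)), hT.2]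
  exact (eq_of_subset_of_card_le hsub (by rw [hcard, (H.hφ _ hT).2])).symm

lemma psi_eq_image (H : MidHyp k Y ψ φ) {S : Finset ℕ} (hS : LvL Y (k-1) S) :
    ψ S = S.image H.pt := by
  have hk := H.hk
  have hSY : S.card < Y.card := by rw [hS.2, H.hY]; omega
  obtain ⟨x, hxY, hxS⟩ : ∃ x ∈ Y, x ∉ S := by
    by_contra h
    push_neg at h
    exact absurd (card_le_card h) (by omega)
  set T : Finset ℕ := insert x S with hTdef
  have hT : LvL Y k T := by
    constructor
    · exact insert_subset hxY hS.1
    · rw [card_insert_of_notMem hxS, hS.2]; omega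
  have hTx : T.erase x = S := by
    rw [hTdef, erase_insert hxS]
  have h1 : φ T \ ψ S = {H.pt x} := by rw [← hTx]; exact H.pt_spec hT (mem_insert_self _ _)
  have h2 : ψ S = φ T \ {H.pt x} := by
    rw [← h1, sdiff_sdiff_right_self, inf_eq_inter,
      inter_eq_right.mpr (by rw [← hTx]; exact H.psi_sub_phi hT (mem_insert_self _ _))]
  rw [h2, H.phi_eq_image hT, hTdef, image_insert]
  rw [insert_sdiff_of_mem _ (mem_singleton_self _)]
  rw [sdiff_singleton_eq_erase, erase_eq_of_notMem]
  intro hmem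
  obtain ⟨a, haS, haeq⟩ := mem_image.mp hmem
  exact hxS (H.pt_injOn (hS.1 haS) hxY haeq ▸ haS)

end MidHyp

abbrev hsVert (n k : ℕ) : Type := {v : Finset ℕ // v ⊆ Finset.Icc 1 n ∧ v.card = k}

/-- The hyper-star graph `HS(n,k)` on the `k`-subsets of `X = {1,...,n}`:
`v, w` are adjacent iff `|v ∩ w| = k-1` and exactly one of `v, w` contains `1`. -/
def HS (n k : ℕ) : SimpleGraph (hsVert n k) :=
  SimpleGraph.fromRel (fun v w =>
    (v.1 ∩ w.1).card = k - 1 ∧ 1 ∈ v.1 ∧ 1 ∉ w.1)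

/-- The automorphism group of a graph, as a subgroup of the permutations of the vertices. -/
def graphAut {V : Type*} (Γ : SimpleGraph V) : Subgroup (Equiv.Perm V) where
  carrier := {e | ∀ a b, Γ.Adj (e a) (e b) ↔ Γ.Adj a b}
  one_mem' := by intro a b; simp
  mul_mem' := by
    intro e f he hf a b
    simp only [Equiv.Perm.mul_apply]
    rw [he, hf]
  inv_mem' := by
    intro e he a b
    have h := he (e⁻¹ a) (e⁻¹ b)
    simpa using h.symm




namespace HSproof

abbrev Xs (k : ℕ) : Finset ℕ := Finset.Icc 1 (2*k)
abbrev Ys (k : ℕ) : Finset ℕ := Finset.Icc 2 (2*k)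

variable {k : ℕ}

lemma Xs_card : (Xs k).card = 2*k := by rw [Nat.card_Icc]; omega
lemma Ys_card : (Ys k).card = 2*k - 1 := by rw [Nat.card_Icc]; omega
lemma one_not_mem_Ys : 1 ∉ Ys k := by rw [mem_Icc]; omega
lemma Ys_sub_Xs : Ys k ⊆ Xs k := by
  intro a ha; rw [mem_Icc] at ha ⊢; omega
lemma one_mem_Xs (hk : 3 ≤ k) : 1 ∈ Xs k := by rw [mem_Icc]; omega
lemma mem_Xs_iff (hk : 3 ≤ k) {a : ℕ} : a ∈ Xs k ↔ a = 1 ∨ a ∈ Ys k := by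
  rw [mem_Icc, mem_Icc]; omega
lemma sub_Ys (hk : 3 ≤ k) {v : Finset ℕ} (h : v ⊆ Xs k) (h1 : 1 ∉ v) : v ⊆ Ys k := by
  intro a ha
  rcases (mem_Xs_iff hk).mp (h ha) with rfl | hY
  · exact absurd ha h1
  · exact hY
lemma erase_sub_Ys (hk : 3 ≤ k) {v : Finset ℕ} (h : v ⊆ Xs k) : v.erase 1 ⊆ Ys k := by
  intro a ha
  rcases (mem_Xs_iff hk).mp (h (mem_of_mem_erase ha)) with rfl | hY
  · exact absurd rfl (mem_erase.mp ha).1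
  · exact hY

lemma rel_iff (hk : 3 ≤ k) (v w : hsVert (2*k) k) :
    ((v.1 ∩ w.1).card = k - 1 ∧ 1 ∈ v.1 ∧ 1 ∉ w.1) ↔
      (1 ∈ v.1 ∧ 1 ∉ w.1 ∧ v.1.erase 1 ⊆ w.1) := by
  constructor
  · rintro ⟨hc, h1v, h1w⟩
    refine ⟨h1v, h1w, ?_⟩
    have hsub : v.1 ∩ w.1 ⊆ v.1.erase 1 := by
      intro a ha
      rw [mem_inter] at ha
      exact mem_erase.mpr ⟨fun h => h1w (h ▸ ha.2), ha.1⟩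
    have hcard : (v.1.erase 1).card = k - 1 := by
      rw [card_erase_of_mem h1v, v.2.2]
    have : v.1 ∩ w.1 = v.1.erase 1 :=
      eq_of_subset_of_card_le hsub (by rw [hcard, hc])
    rw [← this]
    exact inter_subset_right
  · rintro ⟨h1v, h1w, hsub⟩
    refine ⟨?_, h1v, h1w⟩
    have : v.1 ∩ w.1 = v.1.erase 1 := by
      apply Subset.antisymm
      · intro a ha
        rw [mem_inter] at ha
        exact mem_erase.mpr ⟨fun h => h1w (h ▸ ha.2), ha.1⟩
      · intro a ha
        exact mem_inter.mpr ⟨mem_of_mem_erase ha, hsub ha⟩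
    rw [this, card_erase_of_mem h1v, v.2.2]

lemma adj_iff (hk : 3 ≤ k) {v w : hsVert (2*k) k} :
    (HS (2*k) k).Adj v w ↔
      (1 ∈ v.1 ∧ 1 ∉ w.1 ∧ v.1.erase 1 ⊆ w.1) ∨
      (1 ∈ w.1 ∧ 1 ∉ v.1 ∧ w.1.erase 1 ⊆ v.1) := by
  rw [HS, SimpleGraph.fromRel_adj]
  constructor
  · rintro ⟨hne, h | h⟩
    · exact Or.inl ((rel_iff hk v w).mp h)
    · exact Or.inr ((rel_iff hk w v).mp h)
  · rintro (h | h)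
    · refine ⟨fun he => h.2.1 (he ▸ h.1), Or.inl ((rel_iff hk v w).mpr h)⟩
    · refine ⟨fun he => h.2.1 (he ▸ h.1), Or.inr ((rel_iff hk w v).mpr h)⟩

lemma adj_opp (hk : 3 ≤ k) {v w : hsVert (2*k) k} (h : (HS (2*k) k).Adj v w) :
    (1 ∈ v.1 ↔ 1 ∉ w.1) := by
  rcases (adj_iff hk).mp h with ⟨h1, h2, _⟩ | ⟨h1, h2, _⟩
  · exact ⟨fun _ => h2, fun _ => h1⟩
  · exact ⟨fun hv => absurd hv h2, fun _ => absurd h1 (by tauto)⟩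

/-- complement vertex map -/
def cVert (hk : 3 ≤ k) (v : hsVert (2*k) k) : hsVert (2*k) k :=
  ⟨Xs k \ v.1, sdiff_subset, by
    rw [card_sdiff_of_subset v.2.1, Nat.card_Icc, v.2.2]; omega⟩

lemma cVert_invol (hk : 3 ≤ k) : Function.Involutive (cVert hk) := by
  intro v
  apply Subtype.ext
  exact Finset.sdiff_sdiff_eq_self v.2.1

lemma one_mem_cVert (hk : 3 ≤ k) (v : hsVert (2*k) k) :
    1 ∈ (cVert hk v).1 ↔ 1 ∉ v.1 := by
  simp only [cVert, mem_sdiff]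
  exact ⟨fun h => h.2, fun h => ⟨one_mem_Xs hk, h⟩⟩

lemma comp_sub (hk : 3 ≤ k) {v w : Finset ℕ} (hv : v ⊆ Xs k) :
    ((Xs k \ w).erase 1 ⊆ Xs k \ v) ↔ v.erase 1 ⊆ w := by
  constructor
  · intro h a ha
    rw [mem_erase] at ha
    by_contra haw
    have : a ∈ (Xs k \ w).erase 1 :=
      mem_erase.mpr ⟨ha.1, mem_sdiff.mpr ⟨hv ha.2, haw⟩⟩
    exact (mem_sdiff.mp (h this)).2 ha.2
  · intro h a ha
    rw [mem_erase, mem_sdiff] at ha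
    refine mem_sdiff.mpr ⟨ha.2.1, fun hav => ?_⟩
    exact ha.2.2 (h (mem_erase.mpr ⟨ha.1, hav⟩))

lemma cVert_adj (hk : 3 ≤ k) (v w : hsVert (2*k) k) :
    (HS (2*k) k).Adj (cVert hk v) (cVert hk w) ↔ (HS (2*k) k).Adj v w := by
  rw [adj_iff hk, adj_iff hk]
  have hcv := one_mem_cVert hk v
  have hcw := one_mem_cVert hk w
  constructor
  · rintro (⟨h1, h2, h3⟩ | ⟨h1, h2, h3⟩)
    · refine Or.inr ⟨?_, hcv.mp h1, ?_⟩
      · by_contra h1w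
        exact h2 (hcw.mpr h1w)
      · exact (comp_sub hk w.2.1).mp h3
    · refine Or.inl ⟨?_, hcw.mp h1, ?_⟩
      · by_contra h1v
        exact h2 (hcv.mpr h1v)
      · exact (comp_sub hk v.2.1).mp h3
  · rintro (⟨h1, h2, h3⟩ | ⟨h1, h2, h3⟩)
    · refine Or.inr ⟨hcw.mpr h2, fun hc => (hcv.mp hc) h1, ?_⟩
      exact (comp_sub hk v.2.1).mpr h3
    · refine Or.inl ⟨hcv.mpr h2, fun hc => (hcw.mp hc) h1, ?_⟩
      exact (comp_sub hk w.2.1).mpr h3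

def cPerm (hk : 3 ≤ k) : Equiv.Perm (hsVert (2*k) k) :=
  (cVert_invol hk).toPerm

lemma cPerm_apply (hk : 3 ≤ k) (v : hsVert (2*k) k) : cPerm hk v = cVert hk v := rfl

end HSproof

namespace HSproof2
open HSproof

variable {k : ℕ}

/-- extend a permutation of Y to a function on ℕ fixing everything else -/
def gfun (σ : Equiv.Perm {x // x ∈ Ys k}) : ℕ → ℕ :=
  fun x => if h : x ∈ Ys k then (σ ⟨x, h⟩ : ℕ) else x

lemma gfun_left_inv (σ : Equiv.Perm {x // x ∈ Ys k}) (x : ℕ) :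
    gfun σ⁻¹ (gfun σ x) = x := by
  unfold gfun
  by_cases h : x ∈ Ys k
  · rw [dif_pos h]
    have hmem : ((σ ⟨x, h⟩ : {x // x ∈ Ys k}) : ℕ) ∈ Ys k := (σ ⟨x, h⟩).2
    rw [dif_pos hmem]
    have : (⟨((σ ⟨x, h⟩ : {x // x ∈ Ys k}) : ℕ), hmem⟩ : {x // x ∈ Ys k}) = σ ⟨x, h⟩ :=
      Subtype.ext rfl
    rw [this, Equiv.Perm.inv_def, Equiv.symm_apply_apply]
  · rw [dif_neg h, dif_neg h]

lemma gfun_right_inv (σ : Equiv.Perm {x // x ∈ Ys k}) (x : ℕ) :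
    gfun σ (gfun σ⁻¹ x) = x := by
  have := gfun_left_inv σ⁻¹ x
  rwa [inv_inv] at this

lemma gfun_inj (σ : Equiv.Perm {x // x ∈ Ys k}) : Function.Injective (gfun σ) := by
  intro a b hab
  have := gfun_left_inv σ a
  rw [hab, gfun_left_inv σ b] at this
  exact this.symm

lemma gfun_mem_Ys (σ : Equiv.Perm {x // x ∈ Ys k}) {x : ℕ} (h : x ∈ Ys k) :
    gfun σ x ∈ Ys k := by
  unfold gfun; rw [dif_pos h]; exact (σ ⟨x, h⟩).2

lemma gfun_one (σ : Equiv.Perm {x // x ∈ Ys k}) : gfun σ 1 = 1 := by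
  unfold gfun; rw [dif_neg one_not_mem_Ys]

lemma gfun_apply_mem (σ : Equiv.Perm {x // x ∈ Ys k}) {x : ℕ} (h : x ∈ Ys k) :
    gfun σ x = (σ ⟨x, h⟩ : ℕ) := by
  unfold gfun; rw [dif_pos h]

lemma gfun_mem_Xs (hk : 3 ≤ k) (σ : Equiv.Perm {x // x ∈ Ys k}) {x : ℕ} (h : x ∈ Xs k) :
    gfun σ x ∈ Xs k := by
  rcases (mem_Xs_iff hk).mp h with rfl | hY
  · rw [gfun_one]; exact one_mem_Xs hk
  · exact Ys_sub_Xs (gfun_mem_Ys σ hY)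

/-- induced vertex map -/
def fVert (hk : 3 ≤ k) (σ : Equiv.Perm {x // x ∈ Ys k}) (v : hsVert (2*k) k) :
    hsVert (2*k) k :=
  ⟨v.1.image (gfun σ), by
    intro a ha
    obtain ⟨x, hx, rfl⟩ := mem_image.mp ha
    exact gfun_mem_Xs hk σ (v.2.1 hx), by
    rw [card_image_of_injective _ (gfun_inj σ), v.2.2]⟩

lemma fVert_comp (hk : 3 ≤ k) (σ τ : Equiv.Perm {x // x ∈ Ys k})
    (hcomp : ∀ x, gfun σ (gfun τ x) = x) (v : hsVert (2*k) k) :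
    fVert hk σ (fVert hk τ v) = v := by
  apply Subtype.ext
  show (v.1.image (gfun τ)).image (gfun σ) = v.1
  rw [image_image]
  have : (gfun σ ∘ gfun τ) = id := funext fun x => hcomp x
  rw [this, image_id]

/-- induced vertex permutation -/
def fPerm (hk : 3 ≤ k) (σ : Equiv.Perm {x // x ∈ Ys k}) : Equiv.Perm (hsVert (2*k) k) where
  toFun := fVert hk σ
  invFun := fVert hk σ⁻¹
  left_inv v := fVert_comp hk σ⁻¹ σ (gfun_left_inv σ) v
  right_inv v := fVert_comp hk σ σ⁻¹ (gfun_right_inv σ) v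

lemma fPerm_apply (hk : 3 ≤ k) (σ : Equiv.Perm {x // x ∈ Ys k}) (v : hsVert (2*k) k) :
    ((fPerm hk σ v : hsVert (2*k) k)).1 = v.1.image (gfun σ) := rfl

lemma one_mem_image_gfun (σ : Equiv.Perm {x // x ∈ Ys k}) (v : Finset ℕ) :
    1 ∈ v.image (gfun σ) ↔ 1 ∈ v := by
  rw [mem_image]
  constructor
  · rintro ⟨x, hx, hgx⟩
    have : gfun σ x = gfun σ 1 := by rw [hgx, gfun_one]
    rwa [← gfun_inj σ this]
  · intro h
    exact ⟨1, h, gfun_one σ⟩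

lemma erase_image_gfun (σ : Equiv.Perm {x // x ∈ Ys k}) (v : Finset ℕ) :
    (v.image (gfun σ)).erase 1 = (v.erase 1).image (gfun σ) := by
  have := Finset.image_erase (gfun_inj σ) v 1
  rw [gfun_one] at this
  exact this.symm

lemma fPerm_adj (hk : 3 ≤ k) (σ : Equiv.Perm {x // x ∈ Ys k}) (v w : hsVert (2*k) k) :
    (HS (2*k) k).Adj (fPerm hk σ v) (fPerm hk σ w) ↔ (HS (2*k) k).Adj v w := by
  rw [adj_iff hk, adj_iff hk]
  rw [fPerm_apply, fPerm_apply]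
  rw [one_mem_image_gfun, one_mem_image_gfun, erase_image_gfun, erase_image_gfun]
  rw [Finset.image_subset_image_iff (gfun_inj σ), Finset.image_subset_image_iff (gfun_inj σ)]

lemma fPerm_mem_aut (hk : 3 ≤ k) (σ : Equiv.Perm {x // x ∈ Ys k}) :
    ∀ a b, (HS (2*k) k).Adj (fPerm hk σ a) (fPerm hk σ b) ↔ (HS (2*k) k).Adj a b :=
  fPerm_adj hk σ

end HSproof2

namespace HSproof3
open HSproof HSproof2

variable {k : ℕ}

/-- B-side vertex -/
def vB (hk : 3 ≤ k) (T : Finset ℕ) (hT : LvL (Ys k) k T) : hsVert (2*k) k :=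
  ⟨T, hT.1.trans Ys_sub_Xs, hT.2⟩

lemma one_not_mem_vB (hk : 3 ≤ k) {T : Finset ℕ} (hT : LvL (Ys k) k T) :
    1 ∉ (vB hk T hT).1 := fun h => one_not_mem_Ys (hT.1 h)

lemma not_mem_S (hk : 3 ≤ k) {S : Finset ℕ} (hS : LvL (Ys k) (k-1) S) : 1 ∉ S :=
  fun h => one_not_mem_Ys (hS.1 h)

/-- A-side vertex -/
def vA (hk : 3 ≤ k) (S : Finset ℕ) (hS : LvL (Ys k) (k-1) S) : hsVert (2*k) k :=
  ⟨insert 1 S, insert_subset (one_mem_Xs hk) (hS.1.trans Ys_sub_Xs), by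
    rw [card_insert_of_notMem (not_mem_S hk hS), hS.2]; omega⟩

lemma one_mem_vA (hk : 3 ≤ k) {S : Finset ℕ} (hS : LvL (Ys k) (k-1) S) :
    1 ∈ (vA hk S hS).1 := mem_insert_self 1 S

lemma vA_erase (hk : 3 ≤ k) {S : Finset ℕ} (hS : LvL (Ys k) (k-1) S) :
    (vA hk S hS).1.erase 1 = S := by
  show (insert 1 S).erase 1 = S
  exact erase_insert (not_mem_S hk hS)

lemma adj_vA_vB (hk : 3 ≤ k) {S T : Finset ℕ} (hS : LvL (Ys k) (k-1) S)
    (hT : LvL (Ys k) k T) :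
    (HS (2*k) k).Adj (vA hk S hS) (vB hk T hT) ↔ S ⊆ T := by
  rw [adj_iff hk]
  constructor
  · rintro (⟨h1, h2, h3⟩ | ⟨h1, h2, h3⟩)
    · rwa [vA_erase hk hS] at h3
    · exact absurd h1 (one_not_mem_vB hk hT)
  · intro h
    exact Or.inl ⟨one_mem_vA hk hS, one_not_mem_vB hk hT, by rwa [vA_erase hk hS]⟩

lemma reach_B_B (hk : 3 ≤ k) :
    ∀ n : ℕ, ∀ T T' : Finset ℕ, (T' \ T).card ≤ n → (hT : LvL (Ys k) k T) →
    (hT' : LvL (Ys k) k T') → (HS (2*k) k).Reachable (vB hk T hT) (vB hk T' hT') := by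
  intro n
  induction n with
  | zero =>
    intro T T' hcard hT hT'
    have h0 : T' \ T = ∅ := card_eq_zero.mp (Nat.le_zero.mp hcard)
    have hsub : T' ⊆ T := sdiff_eq_empty_iff_subset.mp h0
    have heq : T' = T := eq_of_subset_of_card_le hsub (by rw [hT.2, hT'.2])
    subst heq
    rfl
  | succ n ih =>
    intro T T' hcard hT hT'
    by_cases hTT' : T' = T
    · subst hTT'; rfl
    · have hne : (T' \ T).Nonempty := by
        rw [← card_pos]
        by_contra h
        push_neg at h
        exact hTT' (eq_of_subset_of_card_le
          (sdiff_eq_empty_iff_subset.mp (card_eq_zero.mp (Nat.le_zero.mp h)))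
          (by rw [hT.2, hT'.2]))
      obtain ⟨z, hz⟩ := hne
      have hzT' : z ∈ T' := (mem_sdiff.mp hz).1
      have hzT : z ∉ T := (mem_sdiff.mp hz).2
      have hneTT : (T \ T').Nonempty := by
        rw [← card_pos]
        by_contra h
        push_neg at h
        exact hTT' ((eq_of_subset_of_card_le
          (sdiff_eq_empty_iff_subset.mp (card_eq_zero.mp (Nat.le_zero.mp h)))
          (by rw [hT.2, hT'.2])).symm)
      obtain ⟨y, hy⟩ := hneTT
      have hyT : y ∈ T := (mem_sdiff.mp hy).1
      have hyT' : y ∉ T' := (mem_sdiff.mp hy).2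
      have hyz : y ≠ z := fun h => hzT (h ▸ hyT)
      set T'' : Finset ℕ := insert z (T.erase y) with hT''def
      have hzE : z ∉ T.erase y := fun h => hzT (mem_of_mem_erase h)
      have hT'' : LvL (Ys k) k T'' := by
        constructor
        · exact insert_subset (hT'.1 hzT') ((erase_subset _ _).trans hT.1)
        · rw [card_insert_of_notMem hzE, card_erase_of_mem hyT, hT.2]; omega
      have hS : LvL (Ys k) (k-1) (T.erase y) := MidHyp.erase_lvl hT hyT
      have adj1 : (HS (2*k) k).Adj (vA hk (T.erase y) hS) (vB hk T hT) :=
        (adj_vA_vB hk hS hT).mpr (erase_subset _ _)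
      have adj2 : (HS (2*k) k).Adj (vA hk (T.erase y) hS) (vB hk T'' hT'') :=
        (adj_vA_vB hk hS hT'').mpr (subset_insert _ _)
      have hdec : (T' \ T'').card ≤ n := by
        have hsub2 : T' \ T'' ⊆ (T' \ T).erase z := by
          intro a ha
          rw [mem_sdiff] at ha
          rw [mem_erase, mem_sdiff]
          have haz : a ≠ z := fun h => ha.2 (h ▸ mem_insert_self z _)
          refine ⟨haz, ha.1, fun haT => ?_⟩
          have hay : a ≠ y := fun h => hyT' (h ▸ ha.1)
          exact ha.2 (mem_insert_of_mem (mem_erase.mpr ⟨hay, haT⟩))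
        calc (T' \ T'').card ≤ ((T' \ T).erase z).card := card_le_card hsub2
          _ = (T' \ T).card - 1 := card_erase_of_mem (mem_sdiff.mpr ⟨hzT', hzT⟩) ▸ rfl
          _ ≤ n := by omega
      exact (adj1.symm.reachable.trans adj2.reachable).trans (ih T'' T' hdec hT'' hT')

lemma reach_to_B (hk : 3 ≤ k) (v : hsVert (2*k) k) :
    ∃ T, ∃ hT : LvL (Ys k) k T, (HS (2*k) k).Reachable v (vB hk T hT) := by
  by_cases h1 : 1 ∈ v.1
  · have hS : LvL (Ys k) (k-1) (v.1.erase 1) :=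
      ⟨erase_sub_Ys hk v.2.1, by rw [card_erase_of_mem h1, v.2.2]⟩
    obtain ⟨T, hsub, hTY, hcard⟩ := exists_subsuperset_card_eq (n := k) hS.1
      (by rw [hS.2]; omega) (by rw [Ys_card]; omega)
    refine ⟨T, ⟨hTY, hcard⟩, ?_⟩
    have hvA : vA hk (v.1.erase 1) hS = v := by
      apply Subtype.ext
      show insert 1 (v.1.erase 1) = v.1
      exact insert_erase h1
    have := (adj_vA_vB hk hS ⟨hTY, hcard⟩).mpr hsub
    rw [hvA] at this
    exact this.reachable
  · have hT : LvL (Ys k) k v.1 := ⟨sub_Ys hk v.2.1 h1, v.2.2⟩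
    exact ⟨v.1, hT, by rw [show vB hk v.1 hT = v from Subtype.ext rfl]⟩

lemma reach_all (hk : 3 ≤ k) (v w : hsVert (2*k) k) :
    (HS (2*k) k).Reachable v w := by
  obtain ⟨T, hT, hrv⟩ := reach_to_B hk v
  obtain ⟨T', hT', hrw⟩ := reach_to_B hk w
  exact (hrv.trans (reach_B_B hk (T' \ T).card T T' le_rfl hT hT')).trans hrw.symm

lemma iff_of_reachable {P : hsVert (2*k) k → Prop}
    (hadj : ∀ v w, (HS (2*k) k).Adj v w → (P v ↔ P w)) :
    ∀ {v w : hsVert (2*k) k}, (HS (2*k) k).Reachable v w → (P v ↔ P w) := by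
  intro v w hr
  obtain ⟨p⟩ := hr
  induction p with
  | nil => rfl
  | cons h p ih => exact (hadj _ _ h).trans ih

lemma side_dichotomy (hk : 3 ≤ k) (e : Equiv.Perm (hsVert (2*k) k))
    (he : e ∈ graphAut (HS (2*k) k)) :
    (∀ v, 1 ∈ (e v).1 ↔ 1 ∈ v.1) ∨ (∀ v, 1 ∈ (e v).1 ↔ 1 ∉ v.1) := by
  set P : hsVert (2*k) k → Prop := fun v => (1 ∈ (e v).1 ↔ 1 ∈ v.1) with hP
  have hadj : ∀ v w, (HS (2*k) k).Adj v w → (P v ↔ P w) := by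
    intro v w hvw
    have h1 := adj_opp hk hvw
    have h2 := adj_opp hk ((he v w).mpr hvw)
    rw [hP]
    simp only
    tauto
  have hT0 : LvL (Ys k) k (Finset.Icc 2 (k+1)) := by
    constructor
    · intro a ha; rw [mem_Icc] at ha ⊢; omega
    · rw [Nat.card_Icc]; omega
  set v0 : hsVert (2*k) k := vB hk _ hT0 with hv0
  by_cases hco : P v0
  · left
    intro v
    exact (iff_of_reachable hadj (reach_all hk v v0)).mpr hco
  · right
    intro v
    have := (iff_of_reachable hadj (reach_all hk v v0))
    rw [hP] at this
    simp only at this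
    constructor
    · intro h1e h1v
      exact hco (this.mp ⟨fun _ => h1v, fun _ => h1e⟩)
    · intro h1v
      by_contra h1e
      exact hco (this.mp ⟨fun h => (h1e h).elim, fun h => (h1v h).elim⟩)

end HSproof3

namespace HSproof4
open HSproof HSproof2 HSproof3

variable {k : ℕ}

attribute [local instance] Classical.propDecidable

noncomputable def phiE (hk : 3 ≤ k) (e : Equiv.Perm (hsVert (2*k) k)) : Finset ℕ → Finset ℕ :=
  fun T => if h : LvL (Ys k) k T then (e (vB hk T h)).1 else ∅

noncomputable def psiE (hk : 3 ≤ k) (e : Equiv.Perm (hsVert (2*k) k)) : Finset ℕ → Finset ℕ :=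
  fun S => if h : LvL (Ys k) (k-1) S then ((e (vA hk S h)).1).erase 1 else ∅

lemma phiE_eq (hk : 3 ≤ k) (e : Equiv.Perm (hsVert (2*k) k)) {T : Finset ℕ}
    (h : LvL (Ys k) k T) : phiE hk e T = (e (vB hk T h)).1 := dif_pos h

lemma psiE_eq (hk : 3 ≤ k) (e : Equiv.Perm (hsVert (2*k) k)) {S : Finset ℕ}
    (h : LvL (Ys k) (k-1) S) : psiE hk e S = ((e (vA hk S h)).1).erase 1 := dif_pos h

lemma mkMid (hk : 3 ≤ k) (e : Equiv.Perm (hsVert (2*k) k))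
    (he : e ∈ graphAut (HS (2*k) k)) (hside : ∀ v, 1 ∈ (e v).1 ↔ 1 ∈ v.1) :
    MidHyp k (Ys k) (psiE hk e) (phiE hk e) := by
  constructor
  · exact hk
  · exact Ys_card
  · -- hψ
    intro S hS
    rw [psiE_eq hk e hS]
    refine ⟨erase_sub_Ys hk (e (vA hk S hS)).2.1, ?_⟩
    rw [card_erase_of_mem ((hside _).mpr (one_mem_vA hk hS)), (e (vA hk S hS)).2.2]
  · -- hφ
    intro T hT
    rw [phiE_eq hk e hT]
    refine ⟨sub_Ys hk (e (vB hk T hT)).2.1 ?_, (e (vB hk T hT)).2.2⟩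
    exact fun h => one_not_mem_vB hk hT ((hside _).mp h)
  · -- hψinj
    intro S S' hS hS' heq
    rw [psiE_eq hk e hS, psiE_eq hk e hS'] at heq
    have h1 : 1 ∈ (e (vA hk S hS)).1 := (hside _).mpr (one_mem_vA hk hS)
    have h1' : 1 ∈ (e (vA hk S' hS')).1 := (hside _).mpr (one_mem_vA hk hS')
    have hval : (e (vA hk S hS)).1 = (e (vA hk S' hS')).1 := by
      rw [← insert_erase h1, ← insert_erase h1', heq]
    have hvv : vA hk S hS = vA hk S' hS' := e.injective (Subtype.ext hval)
    have hins : insert 1 S = insert 1 S' := congrArg Subtype.val hvv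
    rw [← erase_insert (not_mem_S hk hS), ← erase_insert (not_mem_S hk hS'), hins]
  · -- hφinj
    intro T T' hT hT' heq
    rw [phiE_eq hk e hT, phiE_eq hk e hT'] at heq
    have hvv : vB hk T hT = vB hk T' hT' := e.injective (Subtype.ext heq)
    exact congrArg Subtype.val hvv
  · -- hcompat
    intro S T hS hT
    rw [psiE_eq hk e hS, phiE_eq hk e hT]
    rw [← adj_vA_vB hk hS hT, ← he (vA hk S hS) (vB hk T hT)]
    rw [adj_iff hk]
    constructor
    · rintro (⟨h1, h2, h3⟩ | ⟨h1, h2, h3⟩)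
      · exact h3
      · exact absurd h1 (fun h => one_not_mem_vB hk hT ((hside _).mp h))
    · intro h
      exact Or.inl ⟨(hside _).mpr (one_mem_vA hk hS),
        fun hc => one_not_mem_vB hk hT ((hside _).mp hc), h⟩

noncomputable def sigmaOf {ψ φ : Finset ℕ → Finset ℕ} (H : MidHyp k (Ys k) ψ φ) :
    Equiv.Perm {x // x ∈ Ys k} :=
  Equiv.ofBijective (fun x => ⟨H.pt x.1, H.pt_mem_Y x.2⟩)
    (Finite.injective_iff_bijective.mp
      (fun a b hab => Subtype.ext (H.pt_injOn a.2 b.2 (congrArg Subtype.val hab))))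

lemma gfun_sigmaOf {ψ φ : Finset ℕ → Finset ℕ} (H : MidHyp k (Ys k) ψ φ)
    {x : ℕ} (hx : x ∈ Ys k) : gfun (sigmaOf H) x = H.pt x := by
  rw [gfun_apply_mem _ hx]
  rfl

lemma recon (hk : 3 ≤ k) (e : Equiv.Perm (hsVert (2*k) k))
    (he : e ∈ graphAut (HS (2*k) k)) (hside : ∀ v, 1 ∈ (e v).1 ↔ 1 ∈ v.1) :
    e = fPerm hk (sigmaOf (mkMid hk e he hside)) := by
  set H := mkMid hk e he hside with hH
  apply Equiv.ext
  intro v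
  apply Subtype.ext
  show (e v).1 = v.1.image (gfun (sigmaOf H))
  by_cases h1 : 1 ∈ v.1
  · -- A side
    have hS : LvL (Ys k) (k-1) (v.1.erase 1) :=
      ⟨erase_sub_Ys hk v.2.1, by rw [card_erase_of_mem h1, v.2.2]⟩
    have hvA : vA hk (v.1.erase 1) hS = v := Subtype.ext (insert_erase h1)
    have h2 : (e v).1.erase 1 = psiE hk e (v.1.erase 1) := by
      rw [psiE_eq hk e hS, hvA]
    have h3 : (e v).1.erase 1 = (v.1.erase 1).image H.pt := by
      rw [h2]; exact H.psi_eq_image hS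
    have h1e : 1 ∈ (e v).1 := (hside v).mpr h1
    calc (e v).1 = insert 1 ((e v).1.erase 1) := (insert_erase h1e).symm
      _ = insert 1 ((v.1.erase 1).image H.pt) := by rw [h3]
      _ = insert 1 ((v.1.erase 1).image (gfun (sigmaOf H))) := by
          congr 1
          exact image_congr (fun x hx => (gfun_sigmaOf H (hS.1 hx)).symm)
      _ = (insert 1 (v.1.erase 1)).image (gfun (sigmaOf H)) := by
          rw [image_insert, gfun_one]
      _ = v.1.image (gfun (sigmaOf H)) := by rw [insert_erase h1]
  · -- B side
    have hT : LvL (Ys k) k v.1 := ⟨sub_Ys hk v.2.1 h1, v.2.2⟩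
    have hvB : vB hk v.1 hT = v := Subtype.ext rfl
    have h2 : (e v).1 = phiE hk e v.1 := by rw [phiE_eq hk e hT, hvB]
    rw [h2, H.phi_eq_image hT]
    exact image_congr (fun x hx => (gfun_sigmaOf H (hT.1 hx)).symm)

end HSproof4

namespace HSproof5
open HSproof HSproof2 HSproof3 HSproof4

variable {k : ℕ}

lemma cPerm_mem (hk : 3 ≤ k) : cPerm hk ∈ graphAut (HS (2*k) k) :=
  fun a b => cVert_adj hk a b

lemma fPerm_mem (hk : 3 ≤ k) (σ : Equiv.Perm {x // x ∈ Ys k}) :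
    fPerm hk σ ∈ graphAut (HS (2*k) k) :=
  fun a b => fPerm_adj hk σ a b

noncomputable def Phi (hk : 3 ≤ k) (p : Equiv.Perm {x // x ∈ Ys k} × Bool) :
    ↥(graphAut (HS (2*k) k)) :=
  ⟨(if p.2 then cPerm hk else 1) * fPerm hk p.1, by
    apply Subgroup.mul_mem
    · by_cases hb : p.2
      · rw [if_pos hb]; exact cPerm_mem hk
      · rw [if_neg hb]; exact Subgroup.one_mem _
    · exact fPerm_mem hk p.1⟩

def T0 (k : ℕ) : Finset ℕ := Finset.Icc 2 (k+1)

lemma hT0 (hk : 3 ≤ k) : LvL (Ys k) k (T0 k) := by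
  constructor
  · intro a ha; rw [T0, mem_Icc] at ha; rw [mem_Icc]; omega
  · rw [T0, Nat.card_Icc]; omega

lemma one_mem_Phi (hk : 3 ≤ k) (σ : Equiv.Perm {x // x ∈ Ys k}) (b : Bool) :
    (1 ∈ (((if b then cPerm hk else 1) * fPerm hk σ) (vB hk (T0 k) (hT0 hk))).1) ↔ b = true := by
  have hnot : 1 ∉ (fPerm hk σ (vB hk (T0 k) (hT0 hk))).1 := by
    rw [fPerm_apply, one_mem_image_gfun]
    exact one_not_mem_vB hk (hT0 hk)
  cases b with
  | false =>
    simp only [if_neg (by simp : ¬(false = true)), one_mul]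
    exact ⟨fun h => absurd h hnot, fun h => absurd h (by simp)⟩
  | true =>
    simp only [if_true, Equiv.Perm.mul_apply]
    rw [cPerm_apply, one_mem_cVert]
    simp only [eq_self_iff_true, iff_true]
    exact hnot

lemma fPerm_injective (hk : 3 ≤ k) {σ σ' : Equiv.Perm {x // x ∈ Ys k}}
    (h : fPerm hk σ = fPerm hk σ') : σ = σ' := by
  apply Equiv.ext
  intro x
  obtain ⟨T, hsub, hTY, hcard⟩ := exists_subsuperset_card_eq (n := k)
    (singleton_subset_iff.mpr x.2) (by rw [card_singleton]; omega)
    (by rw [Ys_card]; omega)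
  have hT : LvL (Ys k) k T := ⟨hTY, hcard⟩
  have hxT : x.1 ∈ T := hsub (mem_singleton_self _)
  have hS : LvL (Ys k) (k-1) (T.erase x.1) := MidHyp.erase_lvl hT hxT
  have hvT : T.image (gfun σ) = T.image (gfun σ') := by
    have := DFunLike.congr_fun h (vB hk T hT)
    exact congrArg Subtype.val this
  have hvS : (T.erase x.1).image (gfun σ) = (T.erase x.1).image (gfun σ') := by
    have h2 := DFunLike.congr_fun h (vA hk (T.erase x.1) hS)
    have h3 := congrArg Subtype.val h2
    have h4 : (insert 1 (T.erase x.1)).image (gfun σ)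
        = (insert 1 (T.erase x.1)).image (gfun σ') := h3
    have e1 := erase_image_gfun σ (insert 1 (T.erase x.1))
    have e2 := erase_image_gfun σ' (insert 1 (T.erase x.1))
    rw [erase_insert (not_mem_S hk hS)] at e1 e2
    rw [← e1, ← e2, h4]
  set A : Finset ℕ := T.image (gfun σ) with hA
  set B : Finset ℕ := (T.erase x.1).image (gfun σ) with hB
  have hBA : B ⊆ A := image_subset_image (erase_subset _ _)
  have hcA : A.card = k := by rw [hA, card_image_of_injective _ (gfun_inj σ), hT.2]
  have hcB : B.card = k - 1 := by
    rw [hB, card_image_of_injective _ (gfun_inj σ), card_erase_of_mem hxT, hT.2]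
  have hAB : (A \ B).card = 1 := by rw [card_sdiff_of_subset hBA, hcA, hcB]; omega
  obtain ⟨r, hr⟩ := card_eq_one.mp hAB
  have hmem : ∀ τ : Equiv.Perm {x // x ∈ Ys k},
      T.image (gfun τ) = A → (T.erase x.1).image (gfun τ) = B → gfun τ x.1 ∈ A \ B := by
    intro τ hτA hτB
    rw [mem_sdiff]
    constructor
    · rw [← hτA]; exact mem_image_of_mem _ hxT
    · rw [← hτB]
      intro hc
      obtain ⟨a, haS, haeq⟩ := mem_image.mp hc
      exact (notMem_erase x.1 T) ((gfun_inj τ haeq) ▸ haS)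
  have m1 : gfun σ x.1 ∈ A \ B := hmem σ rfl rfl
  have m2 : gfun σ' x.1 ∈ A \ B := hmem σ' hvT.symm hvS.symm
  rw [hr, mem_singleton] at m1 m2
  have : gfun σ x.1 = gfun σ' x.1 := m1.trans m2.symm
  rw [gfun_apply_mem σ x.2, gfun_apply_mem σ' x.2] at this
  have hsub2 : σ ⟨x.1, x.2⟩ = σ' ⟨x.1, x.2⟩ := Subtype.ext this
  simpa using hsub2

lemma cPerm_mul_self (hk : 3 ≤ k) : cPerm hk * cPerm hk = 1 := by
  apply Equiv.ext
  intro v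
  exact cVert_invol hk v

lemma Phi_bijective (hk : 3 ≤ k) : Function.Bijective (Phi hk) := by
  constructor
  · rintro ⟨σ, b⟩ ⟨σ', b'⟩ heq
    have hval := congrArg Subtype.val heq
    simp only [Phi] at hval
    have hb : b = b' := by
      have h1 := one_mem_Phi hk σ b
      have h2 := one_mem_Phi hk σ' b'
      rw [hval] at h1
      have := h1.symm.trans h2
      cases b <;> cases b' <;> simp_all
    subst hb
    have hf : fPerm hk σ = fPerm hk σ' := mul_left_cancel hval
    rw [fPerm_injective hk hf]
  · rintro ⟨e, he⟩
    rcases side_dichotomy hk e he with hside | hswap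
    · refine ⟨(sigmaOf (mkMid hk e he hside), false), ?_⟩
      apply Subtype.ext
      show (if false then cPerm hk else 1) * fPerm hk _ = e
      rw [if_neg (by simp), one_mul]
      exact (recon hk e he hside).symm
    · have he' : cPerm hk * e ∈ graphAut (HS (2*k) k) :=
        Subgroup.mul_mem _ (cPerm_mem hk) he
      have hside' : ∀ v, 1 ∈ ((cPerm hk * e) v).1 ↔ 1 ∈ v.1 := by
        intro v
        rw [Equiv.Perm.mul_apply, cPerm_apply, one_mem_cVert]
        rw [hswap v]
        constructor
        · intro hnn
          by_contra hv
          exact hnn hv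
        · intro hv hc
          exact hc hv
      refine ⟨(sigmaOf (mkMid hk (cPerm hk * e) he' hside'), true), ?_⟩
      apply Subtype.ext
      show (if true then cPerm hk else 1) * fPerm hk _ = e
      rw [if_pos rfl, ← recon hk (cPerm hk * e) he' hside']
      rw [← mul_assoc, cPerm_mul_self hk, one_mul]

end HSproof5

/-- For `k ≥ 3`, the automorphism group of `HS(2k,k)` has order `2·(2k-1)!`. -/
theorem stmt11 (k : ℕ) (hk : 3 ≤ k) :
    Nat.card ↥(graphAut (HS (2*k) k)) = 2 * Nat.factorial (2*k - 1) := by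
  classical
  have hbij := HSproof5.Phi_bijective hk
  have h1 := Nat.card_eq_of_bijective _ hbij
  rw [← h1, Nat.card_prod, Nat.card_eq_fintype_card, Nat.card_eq_fintype_card]
  rw [Fintype.card_perm, Fintype.card_coe, HSproof.Ys_card, Fintype.card_bool]
  rw [mul_comm]
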